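/- Let n, m be integers with 1 ≤ m ≤ n − 2 and let β, β′ be the roots of the irreducible polynomial P(x) = x² − nx + m with 0 < β′ < 1 < β. Suppose that for some integer q ≥ 2 one has a factorization P(x^q) = Q₁(x)·Q₂(x) with Q₁, Q₂ ∈ ℤ[x] of degree ≥ 1. Then there exist an integer i ≥ 2, an integer j with 1 ≤ j < i and gcd(i,j) = 1, and a natural number a such that m = a^i; in particular m is a perfect power. -/

import Mathlib

open Polynomial

/-- Product of a multiset whose elements are all `β` or `β'`. -/
lemma exists_prod_two (β β' : ℝ) (M : Multiset ℝ) (h : ∀ x ∈ M, x = β ∨ x = β') :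
    ∃ a b : ℕ, a + b = Multiset.card M ∧ M.prod = β ^ a * β' ^ b := by
  induction M using Multiset.induction with
  | empty => exact ⟨0, 0, by simp⟩
  | cons x M ih =>
    obtain ⟨a, b, hab, hp⟩ := ih (fun y hy => h y (Multiset.mem_cons_of_mem hy))
    rcases h x (Multiset.mem_cons_self x M) with rfl | rfl
    · exact ⟨a + 1, b, by simp [hab, Multiset.card_cons]; omega,
        by rw [Multiset.prod_cons, hp]; ring⟩
    · exact ⟨a, b + 1, by simp [hab, Multiset.card_cons]; omega,
        by rw [Multiset.prod_cons, hp]; ring⟩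

/-- Integer coefficients expressing powers of a quadratic integer. -/
def uvSeq (n m : ℤ) : ℕ → ℤ × ℤ
  | 0 => (0, 1)
  | k + 1 => (n * (uvSeq n m k).1 + (uvSeq n m k).2, -m * (uvSeq n m k).1)

lemma uvSeq_spec (n m : ℤ) (x : ℝ) (hx : x ^ 2 = n * x - m) :
    ∀ k, x ^ k = ((uvSeq n m k).1 : ℝ) * x + ((uvSeq n m k).2 : ℝ) := by
  intro k
  induction k with
  | zero => simp [uvSeq]
  | succ k ih =>
    rw [pow_succ, ih, uvSeq]
    push_cast
    linear_combination (((uvSeq n m k).1 : ℝ)) * hx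

lemma key_irr (n m : ℤ) (β β' : ℝ) (hb : β ^ 2 = n * β - m) (hb' : β' ^ 2 = n * β' - m)
    (h0 : 0 < β') (hlt : β' < β) (hirr : Irrational β) {k : ℕ} (hk : 1 ≤ k) (t : ℚ) :
    β ^ k ≠ (t : ℝ) := by
  intro ht
  have h1 := uvSeq_spec n m β hb k
  have h2 := uvSeq_spec n m β' hb' k
  set u := (uvSeq n m k).1 with hu
  set v := (uvSeq n m k).2 with hv
  have hppos : β' ^ k < β ^ k := pow_lt_pow_left₀ hlt h0.le (by omega)
  have hue : (u : ℝ) * (β - β') = β ^ k - β' ^ k := by rw [h1, h2]; ring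
  have hune : (u : ℝ) ≠ 0 := by
    intro h
    rw [h, zero_mul] at hue
    linarith
  have huz : u ≠ 0 := by exact_mod_cast hune
  have : ((((t : ℚ) - (v : ℚ)) / (u : ℚ) : ℚ) : ℝ) = β := by
    push_cast
    rw [ht] at h1
    field_simp
    linarith [h1]
  exact hirr ⟨_, this⟩

/-- Bezout-style inverse mod `i`. -/
lemma exists_mul_eq_succ {i j : ℕ} (hi : 2 ≤ i) (hcop : Nat.gcd i j = 1) :
    ∃ u v : ℕ, j * u = i * v + 1 := by
  haveI : NeZero i := ⟨by omega⟩
  have hcop' : Nat.Coprime j i := Nat.Coprime.symm hcop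
  set w := ZMod.unitOfCoprime j hcop'
  set u := ((w⁻¹ : (ZMod i)ˣ) : ZMod i).val with hu
  have h1 : ((j * u : ℕ) : ZMod i) = ((1 : ℕ) : ZMod i) := by
    push_cast
    rw [hu, ZMod.natCast_val, ZMod.cast_id]
    have : (j : ZMod i) = (w : ZMod i) := (ZMod.coe_unitOfCoprime j hcop').symm
    rw [this, ← Units.val_mul, mul_inv_cancel, Units.val_one]
  have h2 : j * u ≡ 1 [MOD i] := (ZMod.natCast_eq_natCast_iff _ _ _).mp h1
  have h3 : j * u % i = 1 % i := h2
  have h4 : 1 % i = 1 := Nat.mod_eq_of_lt (by omega)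
  refine ⟨u, j * u / i, ?_⟩
  have := Nat.div_add_mod (j * u) i
  omega

lemma eq_pow_of_pow_eq_pow {m c : ℕ} {i j : ℕ} (hm : 1 ≤ m) (hi : 2 ≤ i)
    (hcop : Nat.gcd i j = 1) (h : m ^ j = c ^ i) : ∃ d : ℕ, m = d ^ i := by
  obtain ⟨u, v, huv⟩ := exists_mul_eq_succ hi hcop
  have h1 : m ^ (j * u) = c ^ (i * u) := by
    rw [pow_mul, pow_mul, h]
  rw [huv] at h1
  have h2 : (m ^ v) ^ i * m = (c ^ u) ^ i := by
    rw [← pow_mul, mul_comm v i, ← pow_succ m (i*v), h1, ← pow_mul, mul_comm u i]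
  have hdvd : m ^ v ∣ c ^ u := by
    have : (m ^ v) ^ i ∣ (c ^ u) ^ i := Dvd.intro m h2
    exact (Nat.pow_dvd_pow_iff (by omega)).mp this
  obtain ⟨d, hd⟩ := hdvd
  refine ⟨d, ?_⟩
  have h3 : (m ^ v) ^ i * m = (m ^ v) ^ i * d ^ i := by
    rw [h2, hd, mul_pow]
  exact Nat.eq_of_mul_eq_mul_left (by positivity) h3

lemma not_isSquare_disc (n m : ℤ) (hm : 1 ≤ m) (hn : m ≤ n - 2) :
    ¬ IsSquare (n ^ 2 - 4 * m) := by
  rintro ⟨t, ht⟩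
  have hn3 : 3 ≤ n := by omega
  have ht' : n ^ 2 - 4 * m = |t| * |t| := by rw [abs_mul_abs_self]; linarith [ht]
  set t' := |t| with htdef
  have ht0 : 0 ≤ t' := abs_nonneg t
  have htn : t' < n := by nlinarith
  rcases Int.even_or_odd (n - t') with he | ho
  · obtain ⟨s, hs⟩ := he
    set r := n - s with hr
    have hprod : r * s = m := by nlinarith
    have hs1 : 1 ≤ s := by omega
    have hr1 : 1 ≤ r := by omega
    nlinarith [mul_nonneg (sub_nonneg.mpr hr1) (sub_nonneg.mpr hs1)]
  · have hodd : Odd ((n - t') * (n + t')) := by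
      refine ho.mul ?_
      have : n + t' = (n - t') + 2 * t' := by ring
      rw [this]
      exact ho.add_even (even_two_mul t')
    have heq : (n - t') * (n + t') = 4 * m := by nlinarith
    rw [heq] at hodd
    rcases hodd with ⟨k, hk⟩
    omega

/-- **Proposition 5, main argument.** For integers `1 ≤ m ≤ n - 2`, if for
some `q ≥ 2` the polynomial `P(x^q) = x^(2q) - n x^q + m` factors as `Q₁·Q₂` with
`Q₁, Q₂ ∈ ℤ[x]` of degree `≥ 1`, then there are `i ≥ 2`, `1 ≤ j < i` with `gcd(i,j) = 1`,
and `a ∈ ℕ` with `m = a^i`; in particular `m` is a perfect power. -/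
theorem perfectPower_of_factorization
    (n m : ℤ) (hm : 1 ≤ m) (hn : m ≤ n - 2)
    (q : ℕ) (hq : 2 ≤ q)
    (Q₁ Q₂ : ℤ[X]) (hd1 : 1 ≤ Q₁.natDegree) (hd2 : 1 ≤ Q₂.natDegree)
    (hfac : X ^ (2 * q) - C n * X ^ q + C m = Q₁ * Q₂) :
    ∃ i j : ℕ, 2 ≤ i ∧ 1 ≤ j ∧ j < i ∧ Nat.gcd i j = 1 ∧
      ∃ a : ℕ, m = (a : ℤ) ^ i := by
  have hn3 : (3 : ℤ) ≤ n := by omega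
  -- real quadratic data
  set D : ℤ := n ^ 2 - 4 * m with hD
  have hDpos : 0 < D := by nlinarith
  have hDnonsq : ¬ IsSquare D := not_isSquare_disc n m hm hn
  set s : ℝ := Real.sqrt (D : ℝ) with hsdef
  have hs2 : s ^ 2 = (D : ℝ) := Real.sq_sqrt (by exact_mod_cast hDpos.le)
  have hspos : 0 < s := Real.sqrt_pos.mpr (by exact_mod_cast hDpos)
  have hsirr : Irrational s := (irrational_sqrt_intCast_iff_of_nonneg hDpos.le).mpr hDnonsq
  set β : ℝ := ((n : ℝ) + s) / 2 with hβ
  set β' : ℝ := ((n : ℝ) - s) / 2 with hβ'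
  have hmR : (1:ℝ) ≤ (m:ℝ) := by exact_mod_cast hm
  have hnR : (3:ℝ) ≤ (n:ℝ) := by exact_mod_cast hn3
  have hsum : β + β' = (n : ℝ) := by rw [hβ, hβ']; ring
  have hprodR : β * β' = (m : ℝ) := by
    rw [hβ, hβ']
    have : (D:ℝ) = (n:ℝ)^2 - 4*(m:ℝ) := by push_cast [hD]; ring
    nlinarith [hs2]
  have hb : β ^ 2 = n * β - m := by
    have := hsum; have := hprodR; nlinarith
  have hb' : β' ^ 2 = n * β' - m := by nlinarith [hsum, hprodR]
  have hslt : s < (n : ℝ) := by nlinarith [hs2]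
  have hβ'pos : 0 < β' := by rw [hβ']; linarith
  have hβltβ' : β' < β := by rw [hβ, hβ']; linarith
  have hβpos : 0 < β := lt_trans hβ'pos hβltβ'
  have hβirr : Irrational β := by
    have h1 : Irrational ((n : ℤ) + s) := hsirr.intCast_add n
    have h2 : Irrational (((n : ℤ) + s) / ((2:ℤ):ℝ)) := h1.div_intCast (by norm_num)
    rw [hβ]
    convert h2 using 2 <;> push_cast <;> ring
  clear_value β β' s
  -- complex setup
  have hinj : Function.Injective (Int.castRingHom ℂ) := Int.cast_injective
  set P1 : ℂ[X] := Q₁.map (Int.castRingHom ℂ) with hP1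
  have hQ1ne : Q₁ ≠ 0 := fun h => by simp [h] at hd1
  have hQ2ne : Q₂ ≠ 0 := fun h => by simp [h] at hd2
  -- degree and monicity
  have hrw : (X ^ (2 * q) - C n * X ^ q + C m : ℤ[X]) = X ^ (2*q) + (C m - C n * X ^ q) := by
    ring
  have hdlt : (C m - C n * X ^ q : ℤ[X]).degree < (2*q : ℕ) := by
    apply lt_of_le_of_lt (degree_sub_le _ _)
    rw [max_lt_iff]
    constructor
    · refine lt_of_le_of_lt degree_C_le ?_
      exact_mod_cast (by omega : (0:ℕ) < 2*q)
    · apply lt_of_le_of_lt (degree_mul_le _ _)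
      apply lt_of_le_of_lt (add_le_add degree_C_le (degree_X_pow _).le)
      rw [zero_add]
      exact_mod_cast Nat.cast_lt.mpr (by omega : q < 2*q)
  have hmon : (X ^ (2 * q) - C n * X ^ q + C m : ℤ[X]).Monic := by
    rw [hrw]; exact monic_X_pow_add hdlt
  have hdeg : (X ^ (2*q) - C n * X ^ q + C m : ℤ[X]).natDegree = 2*q := by
    rw [hrw]
    have hdd : (X ^ (2*q) + (C m - C n * X ^ q) : ℤ[X]).degree = (2*q : ℕ) := by
      rw [add_comm, degree_add_eq_right_of_degree_lt, degree_X_pow]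
      rwa [degree_X_pow]
    exact natDegree_eq_of_degree_eq_some hdd
  have hdegsum : Q₁.natDegree + Q₂.natDegree = 2*q := by
    rw [← natDegree_mul hQ1ne hQ2ne, ← hfac, hdeg]
  have hlc : Q₁.leadingCoeff * Q₂.leadingCoeff = 1 := by
    rw [← leadingCoeff_mul, ← hfac]; exact hmon
  have hlcu : Q₁.leadingCoeff = 1 ∨ Q₁.leadingCoeff = -1 :=
    Int.isUnit_iff.mp (isUnit_iff_exists_inv.mpr ⟨_, hlc⟩)
  -- evaluation at 0
  have heval0 : Q₁.eval 0 * Q₂.eval 0 = m := by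
    have h0 := congrArg (eval 0) hfac
    simp only [eval_add, eval_sub, eval_mul, eval_pow, eval_X, eval_C,
      zero_pow (by omega : 2*q ≠ 0), zero_pow (by omega : q ≠ 0), mul_zero, sub_zero,
      zero_add, zero_sub, neg_zero] at h0
    exact h0.symm
  have hc0ne : Q₁.eval 0 ≠ 0 := by
    intro h; rw [h, zero_mul] at heval0; omega
  set c : ℕ := (Q₁.eval 0).natAbs with hcdef
  have hc1 : 1 ≤ c := by
    rw [hcdef]; exact Int.natAbs_pos.mpr hc0ne
  -- roots
  have hP1ne : P1 ≠ 0 := (Polynomial.map_ne_zero_iff hinj).mpr hQ1ne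
  have hsplits : P1.Splits := IsAlgClosed.splits P1
  have hcard : Multiset.card P1.roots = Q₁.natDegree := by
    rw [splits_iff_card_roots.mp hsplits, hP1, natDegree_map_eq_of_injective hinj]
  have hroot : ∀ r ∈ P1.roots, ‖r‖ ^ q = β ∨ ‖r‖ ^ q = β' := by
    intro r hr
    have hr0 : P1.eval r = 0 := (mem_roots'.mp hr).2
    have hfr : (r ^ (2*q) - (n:ℂ) * r ^ q + (m:ℂ)) = 0 := by
      have h1 := congrArg (fun p => ((Polynomial.map (Int.castRingHom ℂ) p).eval r)) hfac
      simp only [Polynomial.map_add, Polynomial.map_sub, Polynomial.map_mul,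
        Polynomial.map_pow, Polynomial.map_X, Polynomial.map_C, eval_add, eval_sub,
        eval_mul, eval_pow, eval_X, eval_C, Int.coe_castRingHom] at h1
      rw [← hP1] at h1
      rw [h1, hr0, zero_mul]
    rw [show (2*q) = q*2 by ring, pow_mul] at hfr
    have e1 : ((β:ℂ)) + ((β':ℂ)) = (n:ℂ) := by
      rw [← Complex.ofReal_add, hsum]
      push_cast; ring
    have e2 : ((β:ℂ)) * ((β':ℂ)) = (m:ℂ) := by
      rw [← Complex.ofReal_mul, hprodR]
      push_cast; ring
    have hβC : ((r^q) - (β:ℂ)) * ((r^q) - (β':ℂ)) = 0 := by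
      linear_combination hfr - (r^q) * e1 + e2
    rcases mul_eq_zero.mp hβC with h | h
    · left
      have hrq : r^q = (β:ℂ) := sub_eq_zero.mp h
      rw [← norm_pow, hrq, Complex.norm_real, Real.norm_eq_abs, abs_of_pos hβpos]
    · right
      have hrq : r^q = (β':ℂ) := sub_eq_zero.mp h
      rw [← norm_pow, hrq, Complex.norm_real, Real.norm_eq_abs, abs_of_pos hβ'pos]
  -- evaluate the factored form at 0
  have heval : P1.eval 0 = P1.leadingCoeff * ((P1.roots.map fun a => -a)).prod := by
    conv_lhs => rw [hsplits.eq_prod_roots]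
    rw [eval_mul, eval_C, eval_multiset_prod, Multiset.map_map]
    congr 1
    refine congrArg Multiset.prod (Multiset.map_congr rfl ?_)
    intro a _
    simp
  have habs_lc : ‖P1.leadingCoeff‖ = 1 := by
    have hl : P1.leadingCoeff = ((Q₁.leadingCoeff : ℤ) : ℂ) := leadingCoeff_map_of_injective hinj Q₁
    rcases hlcu with h | h <;> rw [hl, h] <;> simp
  have habsprod : ∀ M : Multiset ℂ, ‖M.prod‖ = (M.map (‖·‖)).prod := by
    intro M
    induction M using Multiset.induction with
    | empty => simp
    | cons x M ih => simp [map_mul, ih]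
  have habs0 : ‖P1.eval 0‖ = (P1.roots.map fun a => ‖a‖).prod := by
    rw [heval, norm_mul, habs_lc, one_mul, habsprod, Multiset.map_map]
    refine congrArg Multiset.prod (Multiset.map_congr rfl ?_)
    intro a _
    simp
  have hP1eval : P1.eval 0 = ((Q₁.eval 0 : ℤ) : ℂ) := by
    rw [hP1, ← coeff_zero_eq_eval_zero, coeff_map, coeff_zero_eq_eval_zero]
    rfl
  have habsc : ‖P1.eval 0‖ = (c : ℝ) := by
    rw [hP1eval, Complex.norm_intCast, hcdef, Nat.cast_natAbs]
    exact Int.cast_abs.symm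
  -- the key product identity
  set M : Multiset ℝ := P1.roots.map (fun r => ‖r‖ ^ q) with hM
  have hMmem : ∀ x ∈ M, x = β ∨ x = β' := by
    intro x hx
    rw [hM] at hx
    obtain ⟨r, hr, rfl⟩ := Multiset.mem_map.mp hx
    exact hroot r hr
  obtain ⟨a, b, habcard, hprodab⟩ := exists_prod_two β β' M hMmem
  have hMprod : M.prod = ((c:ℝ))^q := by
    rw [hM, Multiset.prod_map_pow, ← habs0, habsc]
  have hMcard : Multiset.card M = Q₁.natDegree := by
    rw [hM, Multiset.card_map, hcard]
  have hkey : ((c:ℝ))^q = β ^ a * β' ^ b := by rw [← hMprod, hprodab]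
  -- a = b via irrationality
  have habQ : a + b = Q₁.natDegree := by rw [habcard, hMcard]
  have hmRpos : (0:ℝ) < (m:ℝ) := by linarith
  have hcRpos : (0:ℝ) < (c:ℝ) := by exact_mod_cast hc1
  have haeqb : a = b := by
    rcases lt_trichotomy a b with hlt2 | h | hgt2
    · exfalso
      set k := b - a with hk
      have hk1 : 1 ≤ k := by omega
      have hma : β^a * β'^a = (m:ℝ)^a := by rw [← mul_pow, hprodR]
      have e : ((c:ℝ))^q = β'^k * (m:ℝ)^a := by
        rw [hkey, show b = k + a by omega, pow_add]
        linear_combination β'^k * hma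
      have hmk : β ^ k * β' ^ k = (m:ℝ)^k := by rw [← mul_pow, hprodR]
      have e2 : β^k * ((c:ℝ))^q = (m:ℝ)^k * (m:ℝ)^a := by
        rw [e]; linear_combination ((m:ℝ)^a) * hmk
      have hβk : β^k = ((((m:ℚ)^(k+a) / (c:ℚ)^q) : ℚ) : ℝ) := by
        have hcq : ((c:ℝ))^q ≠ 0 := by positivity
        push_cast
        rw [eq_div_iff hcq, pow_add]
        linear_combination e2
      exact key_irr n m β β' hb hb' hβ'pos hβltβ' hβirr hk1 _ hβk
    · exact h
    · exfalso
      set k := a - b with hk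
      have hk1 : 1 ≤ k := by omega
      have hmb2 : β^b * β'^b = (m:ℝ)^b := by rw [← mul_pow, hprodR]
      have e : ((c:ℝ))^q = β^k * (m:ℝ)^b := by
        rw [hkey, show a = k + b by omega, pow_add]
        linear_combination β^k * hmb2
      have hβk : β^k = ((((c:ℚ)^q / (m:ℚ)^b) : ℚ) : ℝ) := by
        have hmb : ((m:ℝ))^b ≠ 0 := by positivity
        push_cast
        rw [eq_div_iff hmb]
        linarith [e]
      exact key_irr n m β β' hb hb' hβ'pos hβltβ' hβirr hk1 _ hβk
  subst haeqb
  -- numeric bounds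
  have ha1 : 1 ≤ a := by omega
  have haq : a < q := by omega
  have hcq_ma : ((c:ℝ))^q = ((m:ℝ))^a := by
    rw [hkey, ← mul_pow, hprodR]
  set m' : ℕ := m.toNat with hm'def
  have hm' : (m' : ℤ) = m := Int.toNat_of_nonneg (by omega)
  have hm'1 : 1 ≤ m' := by omega
  have hNat : c^q = m'^a := by
    have hmr : ((m' : ℕ) : ℝ) = (m:ℝ) := by exact_mod_cast hm'
    have hR : ((c^q : ℕ) : ℝ) = ((m'^a : ℕ) : ℝ) := by push_cast; rw [hcq_ma, hmr]
    exact_mod_cast hR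
  -- gcd bookkeeping
  set g : ℕ := Nat.gcd a q with hgdef
  have hga : g ∣ a := Nat.gcd_dvd_left a q
  have hgq : g ∣ q := Nat.gcd_dvd_right a q
  have hgpos : 0 < g := Nat.gcd_pos_of_pos_left q (by omega)
  set i : ℕ := q / g with hidef
  set j : ℕ := a / g with hjdef
  have hgi : g * i = q := Nat.mul_div_cancel' hgq
  have hgj : g * j = a := Nat.mul_div_cancel' hga
  have hglea : g ≤ a := Nat.le_of_dvd (by omega) hga
  have hgcd : Nat.gcd i j = 1 := (Nat.coprime_div_gcd_div_gcd hgpos).symm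
  clear_value i j g
  have hi2 : 2 ≤ i := by
    have hi0 : i ≠ 0 := by intro h0; rw [h0, mul_zero] at hgi; omega
    have hi1 : i ≠ 1 := by intro h1; rw [h1, mul_one] at hgi; omega
    omega
  have hj1 : 1 ≤ j := by
    have : j ≠ 0 := by intro h0; rw [h0, mul_zero] at hgj; omega
    omega
  have hji : j < i := by
    have : g * j < g * i := by rw [hgj, hgi]; exact haq
    exact Nat.lt_of_mul_lt_mul_left this
  have hpow : m'^j = c^i := by
    have h1 : (m'^j)^g = (c^i)^g := by
      rw [← pow_mul, ← pow_mul, mul_comm j g, mul_comm i g, hgj, hgi, hNat]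
    exact Nat.pow_left_injective (by omega) h1
  obtain ⟨d, hd⟩ := eq_pow_of_pow_eq_pow hm'1 hi2 hgcd hpow
  refine ⟨i, j, hi2, hj1, hji, hgcd, d, ?_⟩
  rw [← hm', hd]
  push_cast
  ring
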